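/- Let M = [M₁ … M_k] be a full-rank m×n real matrix (n ≤ m) with blocks Mᵢ ∈ ℝ^{m×nᵢ} each of full column rank nᵢ, ∑ nᵢ = n. Then the block diagonal matrix B = blkdiag(B₁, …, B_k) with Bᵢ = (MᵢᵀMᵢ)^{-1/2} minimizes ω((MB)ᵀ(MB)) over all block diagonal B with blocks of sizes nᵢ. -/

import Mathlib

open Matrix

private lemma trace_eq_sum_eigs {n : Type*} [Fintype n] [DecidableEq n] {A : Matrix n n ℝ}
    (hA : A.IsHermitian) : A.trace = ∑ i, hA.eigenvalues i := by
  conv_lhs => rw [hA.spectral_theorem]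
  rw [Unitary.conjStarAlgAut_apply, Matrix.trace_mul_cycle, Unitary.coe_star_mul_self, one_mul, trace_diagonal]
  simp

private lemma amgm_matrix {n : Type*} [Fintype n] [DecidableEq n] [Nonempty n]
    {S : Matrix n n ℝ} (hS : S.PosSemidef) :
    S.det ^ ((1:ℝ)/(Fintype.card n)) ≤ S.trace / (Fintype.card n) := by
  have hN : (0:ℝ) < Fintype.card n := by
    exact_mod_cast Fintype.card_pos
  have hdet : S.det = ∏ i, hS.1.eigenvalues i := by
    simpa using hS.1.det_eq_prod_eigenvalues
  have htr : S.trace = ∑ i, hS.1.eigenvalues i := trace_eq_sum_eigs hS.1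
  have key := Real.geom_mean_le_arith_mean_weighted Finset.univ
    (fun _ => (1:ℝ)/(Fintype.card n)) hS.1.eigenvalues
    (fun i _ => by positivity)
    (by rw [Finset.sum_const, Finset.card_univ, nsmul_eq_mul]; field_simp)
    (fun i _ => hS.eigenvalues_nonneg i)
  rw [Real.finset_prod_rpow _ _ (fun i _ => hS.eigenvalues_nonneg i)] at key
  have heq : ∑ i : n, (1:ℝ)/(Fintype.card n) * hS.1.eigenvalues i
      = (∑ i, hS.1.eigenvalues i) / (Fintype.card n) := by
    rw [Finset.sum_div]
    exact Finset.sum_congr rfl fun i _ => by ring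
  rw [heq] at key
  rw [hdet, htr]
  exact key

theorem omega_optimal_block_diagonal_scaling (k m : ℕ) (sz : Fin k → ℕ)
    (M : Matrix (Fin m) ((i : Fin k) × Fin (sz i)) ℝ)
    (hcard : Fintype.card ((i : Fin k) × Fin (sz i)) ≤ m)
    (hrank : M.rank = Fintype.card ((i : Fin k) × Fin (sz i)))
    (B : ∀ i : Fin k, Matrix (Fin (sz i)) (Fin (sz i)) ℝ)
    (hB : ∀ i, (B i).PosDef ∧
      B i * ((Matrix.of fun r c => M r ⟨i, c⟩)ᵀ * (Matrix.of fun r c => M r ⟨i, c⟩)) *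
        B i = 1) :
    let N : ℕ := Fintype.card ((i : Fin k) × Fin (sz i))
    let omega : Matrix ((i : Fin k) × Fin (sz i)) ((i : Fin k) × Fin (sz i)) ℝ → ℝ :=
      fun S => (S.trace / N) / S.det ^ ((1 : ℝ) / N)
    ∀ C : ∀ i : Fin k, Matrix (Fin (sz i)) (Fin (sz i)) ℝ,
      (∀ i, IsUnit (C i).det) →
      omega ((M * Matrix.blockDiagonal' B)ᵀ * (M * Matrix.blockDiagonal' B)) ≤
        omega ((M * Matrix.blockDiagonal' C)ᵀ * (M * Matrix.blockDiagonal' C)) := by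
  intro N omega C hC
  have goal_eq : ∀ S, omega S = (S.trace / N) / S.det ^ ((1 : ℝ) / N) := fun S => rfl
  have hNcard : N = Fintype.card ((i : Fin k) × Fin (sz i)) := rfl
  rw [goal_eq, goal_eq]
  rcases Nat.eq_zero_or_pos N with hN0 | hNpos
  · have hemp : IsEmpty ((i : Fin k) × Fin (sz i)) :=
      Fintype.card_eq_zero_iff.mp (hNcard ▸ hN0)
    simp [Matrix.trace]
  -- main case
  have hNe : Nonempty ((i : Fin k) × Fin (sz i)) :=
    Fintype.card_pos_iff.mp (hNcard ▸ hNpos)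
  have hNR : (0:ℝ) < (N:ℝ) := by exact_mod_cast hNpos
  have hBdet : ∀ i, IsUnit (B i).det := fun i => (hB i).1.det_pos.ne'.isUnit
  have hBsymm : ∀ i, (B i)ᵀ = B i := fun i => by
    rw [← conjTranspose_eq_transpose_of_trivial]; exact (hB i).1.1
  set D : ∀ i : Fin k, Matrix (Fin (sz i)) (Fin (sz i)) ℝ := fun i => (B i)⁻¹ * C i with hD
  have hCD : ∀ i, B i * D i = C i := fun i => mul_nonsing_inv_cancel_left _ _ (hBdet i)
  have hDdet : ∀ i, IsUnit (D i).det := by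
    intro i
    rw [hD]
    simp only [det_mul, det_nonsing_inv]
    rw [Ring.inverse_eq_inv']
    exact isUnit_iff_ne_zero.mpr
      (mul_ne_zero (inv_ne_zero (hB i).1.det_pos.ne') (hC i).ne_zero)
  set P := M * blockDiagonal' B with hP
  set G := Pᵀ * P with hG
  -- entries of M * blockDiagonal' X
  have hentry : ∀ (X : ∀ i, Matrix (Fin (sz i)) (Fin (sz i)) ℝ) (r : Fin m) (i : Fin k)
      (a : Fin (sz i)),
      (M * blockDiagonal' X) r ⟨i, a⟩ = ∑ c, M r ⟨i, c⟩ * X i c a := by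
    intro X r i a
    rw [mul_apply, ← Finset.univ_sigma_univ, Finset.sum_sigma]
    rw [Fintype.sum_eq_single i]
    · simp
    · intro j hj
      exact Finset.sum_eq_zero fun c _ => by
        rw [blockDiagonal'_apply_ne _ _ _ hj, mul_zero]
  -- normalized blocks
  have hQ1 : ∀ i, ((Matrix.of fun r c => M r ⟨i, c⟩) * B i)ᵀ *
      ((Matrix.of fun r c => M r ⟨i, c⟩) * B i) = 1 := by
    intro i
    rw [transpose_mul, hBsymm]
    calc B i * (Matrix.of fun r c => M r ⟨i, c⟩)ᵀ *
          ((Matrix.of fun r c => M r ⟨i, c⟩) * B i)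
        = B i * ((Matrix.of fun r c => M r ⟨i, c⟩)ᵀ *
            (Matrix.of fun r c => M r ⟨i, c⟩)) * B i := by
          simp only [Matrix.mul_assoc]
      _ = 1 := (hB i).2
  have hGdiag : ∀ (i : Fin k) (a b : Fin (sz i)),
      G ⟨i, a⟩ ⟨i, b⟩ = if a = b then 1 else 0 := by
    intro i a b
    have h1 : G ⟨i, a⟩ ⟨i, b⟩ = (((Matrix.of fun r c => M r ⟨i, c⟩) * B i)ᵀ *
        ((Matrix.of fun r c => M r ⟨i, c⟩) * B i)) a b := by
      rw [hG, mul_apply, mul_apply]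
      refine Finset.sum_congr rfl fun r _ => ?_
      rw [transpose_apply, transpose_apply, hP, hentry, hentry]
      congr 1 <;> · rw [mul_apply]; exact Finset.sum_congr rfl fun c _ => rfl
    rw [h1, hQ1 i, one_apply]
  -- trace of G
  have htrG : G.trace = (N : ℝ) := by
    rw [Matrix.trace]
    have : ∀ p : (i : Fin k) × Fin (sz i), G.diag p = 1 := by
      rintro ⟨i, a⟩
      simp [Matrix.diag, hGdiag i a a]
    rw [Finset.sum_congr rfl fun p _ => this p]
    simp [hNcard]
  -- trace of G * blockDiagonal' F
  have htrGF : ∀ F : ∀ i, Matrix (Fin (sz i)) (Fin (sz i)) ℝ,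
      (G * blockDiagonal' F).trace = (blockDiagonal' F).trace := by
    intro F
    have expand : ∀ (H : Matrix ((i : Fin k) × Fin (sz i)) ((i : Fin k) × Fin (sz i)) ℝ),
        H.trace = ∑ i, ∑ a, H.diag ⟨i, a⟩ := fun H => by
      rw [Matrix.trace, ← Finset.univ_sigma_univ, Finset.sum_sigma]
    rw [expand, expand]
    refine Finset.sum_congr rfl fun i _ => Finset.sum_congr rfl fun a _ => ?_
    rw [Matrix.diag_apply, mul_apply, ← Finset.univ_sigma_univ, Finset.sum_sigma]
    rw [Fintype.sum_eq_single i]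
    · simp [hGdiag, ite_mul, Matrix.diag]
    · intro j hj
      exact Finset.sum_eq_zero fun b _ => by
        rw [blockDiagonal'_apply_ne _ _ _ hj, mul_zero]
  -- structure of the C matrix
  have hMC : M * blockDiagonal' C = P * blockDiagonal' D := by
    rw [hP, Matrix.mul_assoc, ← blockDiagonal'_mul]
    rw [show (fun i => B i * D i) = C from funext hCD]
  have hA : (M * blockDiagonal' C)ᵀ * (M * blockDiagonal' C)
      = (blockDiagonal' D)ᵀ * G * blockDiagonal' D := by
    rw [hMC, transpose_mul, hG]
    simp only [Matrix.mul_assoc]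
  set S := (blockDiagonal' D)ᵀ * blockDiagonal' D with hS
  have hSpsd : S.PosSemidef := by
    rw [hS, ← conjTranspose_eq_transpose_of_trivial]
    exact posSemidef_conjTranspose_mul_self _
  have htrA : ((M * blockDiagonal' C)ᵀ * (M * blockDiagonal' C)).trace = S.trace := by
    rw [hA, trace_mul_cycle, trace_mul_comm, blockDiagonal'_transpose, ← blockDiagonal'_mul,
      htrGF, hS, trace_mul_comm, blockDiagonal'_transpose, ← blockDiagonal'_mul]
  have hdetA : ((M * blockDiagonal' C)ᵀ * (M * blockDiagonal' C)).det = G.det * S.det := by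
    rw [hA, det_mul, det_mul, hS, det_mul, det_transpose]
    ring
  have hdetD : (blockDiagonal' D).det ≠ 0 := by
    have h1 : blockDiagonal' D * blockDiagonal' (fun i => (D i)⁻¹) = 1 := by
      rw [← blockDiagonal'_mul,
        show (fun i => D i * (D i)⁻¹)
            = (1 : ∀ i : Fin k, Matrix (Fin (sz i)) (Fin (sz i)) ℝ) from
          funext fun i => mul_nonsing_inv _ (hDdet i)]
      exact blockDiagonal'_one
    intro h0
    have h2 := congrArg Matrix.det h1
    rw [det_mul, h0, zero_mul, det_one] at h2
    exact zero_ne_one h2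
  have hdetS_pos : 0 < S.det := by
    have : S.det = (blockDiagonal' D).det ^ 2 := by
      rw [hS, det_mul, det_transpose, sq]
    rw [this]
    exact lt_of_le_of_ne (sq_nonneg _) (Ne.symm (pow_ne_zero 2 hdetD))
  -- G is positive definite (via rank)
  have hGpsd : G.PosSemidef := by
    rw [hG, ← conjTranspose_eq_transpose_of_trivial]
    exact posSemidef_conjTranspose_mul_self _
  have hGher : G.IsHermitian := hGpsd.1
  have hBblkdet : IsUnit (blockDiagonal' B).det := by
    have h1 : blockDiagonal' B * blockDiagonal' (fun i => (B i)⁻¹) = 1 := by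
      rw [← blockDiagonal'_mul,
        show (fun i => B i * (B i)⁻¹)
            = (1 : ∀ i : Fin k, Matrix (Fin (sz i)) (Fin (sz i)) ℝ) from
          funext fun i => mul_nonsing_inv _ (hBdet i)]
      exact blockDiagonal'_one
    exact (isUnit_iff_isUnit_det _).mp
      ⟨⟨_, _, h1, mul_eq_one_comm.mp h1⟩, rfl⟩
  have hrankG : G.rank = N := by
    rw [hG, rank_transpose_mul_self, hP, rank_mul_eq_left_of_isUnit_det _ _ hBblkdet,
      hrank, hNcard]
  have hdetG_pos : 0 < G.det := by
    have hpos : ∀ j, 0 < hGher.eigenvalues j := by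
      intro j
      rcases lt_or_eq_of_le (hGpsd.eigenvalues_nonneg j) with h | h
      · exact h
      · exfalso
        have h2 := hGher.rank_eq_card_non_zero_eigs
        rw [hrankG] at h2
        have hlt := Fintype.card_subtype_lt (p := fun j => hGher.eigenvalues j ≠ 0)
          (x := j) (by simp [← h])
        rw [hNcard] at h2
        have he : Fintype.card { i // hGher.eigenvalues i ≠ 0 }
            = Fintype.card { x // (fun j => hGher.eigenvalues j ≠ 0) x } := rfl
        omega
    have : G.det = ∏ j, hGher.eigenvalues j := by
      simpa using hGher.det_eq_prod_eigenvalues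
    rw [this]
    exact Finset.prod_pos fun j _ => hpos j
  -- final computation
  rw [htrG, htrA, hdetA, div_self hNR.ne']
  have hkey : S.det ^ ((1:ℝ)/(N:ℝ)) ≤ S.trace / (N:ℝ) := amgm_matrix hSpsd
  rw [Real.mul_rpow hdetG_pos.le hdetS_pos.le]
  have hg : 0 < G.det ^ ((1:ℝ)/(N:ℝ)) := Real.rpow_pos_of_pos hdetG_pos _
  have hs : 0 < S.det ^ ((1:ℝ)/(N:ℝ)) := Real.rpow_pos_of_pos hdetS_pos _
  rw [div_le_div_iff₀ hg (mul_pos hg hs), one_mul]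
  nlinarith [hkey, hg, hs]
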